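/- Let G=(V,E,w) be a (possibly directed) weighted graph and let G' ⊆ G be an r-missing t-spanner for G. Then for every set P ⊆ V×V of p pairs there exists a subgraph G* ⊆ G with at most |E(G')| + p·r edges such that dist_{G*}(u,v) ≤ t·dist_G(u,v) for every pair (u,v) ∈ P for which v is reachable from u in G. -/

import Mathlib

open scoped ENNReal

namespace Hopsets

/-- A weighted directed graph on vertex type `V`: a finite edge set together
with a weight function. -/
structure WDigraph (V : Type) where
  edges : Finset (V × V)
  w : V × V → ℝ

variable {V : Type}

/-- All edge weights are nonnegative. -/
def WDigraph.Nonneg (G : WDigraph V) : Prop := ∀ e, 0 ≤ G.w e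

/-- Edge weights are polynomially bounded (degree `q`) in the number of vertices. -/
def WDigraph.PolyBounded [Fintype V] (G : WDigraph V) (q : ℕ) : Prop :=
  ∀ e ∈ G.edges, G.w e ≤ (Fintype.card V : ℝ) ^ q

/-- `G` encodes an undirected graph: edges come in symmetric pairs of equal weight. -/
def WDigraph.Symmetric (G : WDigraph V) : Prop :=
  ∀ e ∈ G.edges, (e.2, e.1) ∈ G.edges ∧ G.w (e.2, e.1) = G.w e

/-- `G` is unweighted: every edge has weight `1`. -/
def WDigraph.Unweighted (G : WDigraph V) : Prop := ∀ e, G.w e = 1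

/-- `IsWalkFrom G u v l` : the list of edges `l` forms a walk from `u` to `v` in `G`. -/
def IsWalkFrom (G : WDigraph V) : V → V → List (V × V) → Prop
  | u, v, [] => u = v
  | u, v, e :: l => e ∈ G.edges ∧ e.1 = u ∧ IsWalkFrom G e.2 v l

/-- The total weight of a walk, as an extended nonnegative real. -/
noncomputable def walkWeight (G : WDigraph V) (l : List (V × V)) : ℝ≥0∞ :=
  ENNReal.ofReal ((l.map G.w).sum)

/-- `β`-hop-bounded distance: the infimum weight of a `u`-`v` walk with at most `β` edges. -/
noncomputable def WDigraph.hopDist (G : WDigraph V) (β : ℕ) (u v : V) : ℝ≥0∞ :=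
  ⨅ l ∈ {l : List (V × V) | IsWalkFrom G u v l ∧ l.length ≤ β}, walkWeight G l

/-- Distance: infimum weight of a `u`-`v` walk (`∞` if there is none). -/
noncomputable def WDigraph.dist (G : WDigraph V) (u v : V) : ℝ≥0∞ :=
  ⨅ l ∈ {l : List (V × V) | IsWalkFrom G u v l}, walkWeight G l

/-- `v` is reachable from `u` in `G`. -/
def WDigraph.Reachable (G : WDigraph V) (u v : V) : Prop :=
  ∃ l, IsWalkFrom G u v l

/-- The graph `G ∪ H` obtained by adding the edge set `H`, each added edge `(x,y)`
weighted by `dist_G(x,y)`. -/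
noncomputable def WDigraph.augment [DecidableEq V] (G : WDigraph V) (H : Finset (V × V)) :
    WDigraph V where
  edges := G.edges ∪ H
  w := fun e => if e ∈ H then (G.dist e.1 e.2).toReal else G.w e

/-- `H` is a `(β,ε)`-hopset for `G`:
`dist_G(u,v) ≤ dist^{(β)}_{G∪H}(u,v) ≤ (1+ε)·dist_G(u,v)` for all `u, v`. -/
def IsHopset [DecidableEq V] (G : WDigraph V) (β : ℕ) (ε : ℝ) (H : Finset (V × V)) : Prop :=
  ∀ u v, G.dist u v ≤ (G.augment H).hopDist β u v ∧
    (G.augment H).hopDist β u v ≤ ENNReal.ofReal (1 + ε) * G.dist u v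

/-- The subgraph of `G` with edge set `E'` (same weights). -/
def WDigraph.sub (G : WDigraph V) (E' : Finset (V × V)) : WDigraph V :=
  ⟨E', G.w⟩

/-- `E'` (a subgraph of `G`) is an `r`-missing `t`-spanner: for every reachable pair
`(u,v)` there is a `u`-`v` walk in `G` of weight at most `t·dist_G(u,v)` with at most
`r` edges outside `E'`. -/
def IsMissingSpanner [DecidableEq V] (G : WDigraph V) (E' : Finset (V × V))
    (r : ℕ) (t : ℝ) : Prop :=
  ∀ u v, G.Reachable u v → ∃ l, IsWalkFrom G u v l ∧
    walkWeight G l ≤ ENNReal.ofReal t * G.dist u v ∧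
    (l.filter (fun e => decide (e ∉ E'))).length ≤ r

end Hopsets

namespace Hopsets

lemma walk_edges_mem {G : WDigraph V} :
    ∀ {u v : V} {l : List (V × V)}, IsWalkFrom G u v l → ∀ e ∈ l, e ∈ G.edges := by
  intro u v l
  induction l generalizing u with
  | nil => intro _ e he; simp at he
  | cons a l ih =>
    rintro ⟨ha, _, hw⟩ e he
    rcases List.mem_cons.1 he with rfl | he
    · exact ha
    · exact ih hw e he

lemma isWalkFrom_sub {G : WDigraph V} {E : Finset (V × V)} :
    ∀ {u v : V} {l : List (V × V)}, IsWalkFrom G u v l → (∀ e ∈ l, e ∈ E) →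
      IsWalkFrom (G.sub E) u v l := by
  intro u v l
  induction l generalizing u with
  | nil => intro h _; exact h
  | cons a l ih =>
    rintro ⟨_, h1, hw⟩ hmem
    exact ⟨hmem a List.mem_cons_self, h1,
      ih hw fun e he => hmem e (List.mem_cons_of_mem a he)⟩

lemma dist_le_walkWeight {G : WDigraph V} {u v : V} {l : List (V × V)}
    (h : IsWalkFrom G u v l) : G.dist u v ≤ walkWeight G l :=
  iInf₂_le l h

end Hopsets

open Hopsets in
/-- From an `r`-missing `t`-spanner `G' ⊆ G` and any set `P` of `p`
demand pairs, one gets a subgraph `G* ⊆ G` with at most `|E(G')| + p·r` edges such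
that `dist_{G*}(u,v) ≤ t·dist_G(u,v)` for every pair `(u,v) ∈ P` with `v` reachable
from `u` in `G`. -/
theorem stmt_1 {V : Type} [Fintype V] [DecidableEq V]
    (G : WDigraph V) (hG : G.Nonneg)
    (E' : Finset (V × V)) (hE'sub : E' ⊆ G.edges)
    (r : ℕ) (t : ℝ) (ht : 1 ≤ t)
    (hms : IsMissingSpanner G E' r t)
    (P : Finset (V × V)) (p : ℕ) (hp : P.card = p) :
    ∃ Estar ⊆ G.edges,
      Estar.card ≤ E'.card + p * r ∧
      ∀ uv ∈ P, G.Reachable uv.1 uv.2 →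
        (G.sub Estar).dist uv.1 uv.2 ≤ ENNReal.ofReal t * G.dist uv.1 uv.2 := by
  classical
  have hch : ∀ uv : V × V, ∃ l : List (V × V),
      (G.Reachable uv.1 uv.2 → IsWalkFrom G uv.1 uv.2 l ∧
        walkWeight G l ≤ ENNReal.ofReal t * G.dist uv.1 uv.2 ∧
        (l.filter (fun e => decide (e ∉ E'))).length ≤ r) ∧
      (¬ G.Reachable uv.1 uv.2 → l = []) := by
    intro uv
    by_cases h : G.Reachable uv.1 uv.2
    · obtain ⟨l, hl⟩ := hms uv.1 uv.2 h
      exact ⟨l, fun _ => hl, fun h' => absurd h h'⟩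
    · exact ⟨[], fun h' => absurd h' h, fun _ => rfl⟩
  choose L hL hLnil using hch
  set F : V × V → Finset (V × V) :=
    fun uv => ((L uv).filter (fun e => decide (e ∉ E'))).toFinset with hF
  refine ⟨E' ∪ P.biUnion F, ?_, ?_, ?_⟩
  · intro e he
    rcases Finset.mem_union.1 he with he | he
    · exact hE'sub he
    · obtain ⟨uv, huv, he⟩ := Finset.mem_biUnion.1 he
      rw [hF, List.mem_toFinset] at he
      have he' := List.mem_of_mem_filter he
      by_cases h : G.Reachable uv.1 uv.2
      · exact walk_edges_mem (hL uv h).1 e he'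
      · rw [hLnil uv h] at he'; simp at he'
  · calc (E' ∪ P.biUnion F).card ≤ E'.card + (P.biUnion F).card :=
          Finset.card_union_le _ _
      _ ≤ E'.card + ∑ uv ∈ P, (F uv).card :=
          Nat.add_le_add_left (Finset.card_biUnion_le) _
      _ ≤ E'.card + ∑ _uv ∈ P, r := by
          refine Nat.add_le_add_left (Finset.sum_le_sum fun uv _ => ?_) _
          refine le_trans (List.toFinset_card_le _) ?_
          by_cases h : G.Reachable uv.1 uv.2
          · exact (hL uv h).2.2
          · rw [hLnil uv h]; simp
      _ = E'.card + p * r := by rw [Finset.sum_const, hp, smul_eq_mul]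
  · intro uv huv hreach
    obtain ⟨hwalk, hwt, _⟩ := hL uv hreach
    have hmem : ∀ e ∈ L uv, e ∈ E' ∪ P.biUnion F := by
      intro e he
      by_cases h : e ∈ E'
      · exact Finset.mem_union_left _ h
      · refine Finset.mem_union_right _ (Finset.mem_biUnion.2 ⟨uv, huv, ?_⟩)
        rw [hF, List.mem_toFinset, List.mem_filter]
        exact ⟨he, by simp [h]⟩
    have hw' : IsWalkFrom (G.sub (E' ∪ P.biUnion F)) uv.1 uv.2 (L uv) :=
      isWalkFrom_sub hwalk hmem
    calc (G.sub (E' ∪ P.biUnion F)).dist uv.1 uv.2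
        ≤ walkWeight (G.sub (E' ∪ P.biUnion F)) (L uv) := dist_le_walkWeight hw'
      _ = walkWeight G (L uv) := rfl
      _ ≤ ENNReal.ofReal t * G.dist uv.1 uv.2 := hwt
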